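/- Let i, j, k, l be integers with gcd(i,j) = 1 and gcd(k,l) = 1. Let G be the group presented by generators x, y, a, b and relators xy = yx, ab = ba, xⁱyʲ = aᵏbˡ. Then every subgroup S of G (not necessarily finitely generated) either admits a surjective group homomorphism onto the free group F₂ of rank 2 or is isomorphic to the trivial group, to ℤ, or to ℤ × ℤ. -/

import Mathlib

/-- Generators `x, y, a, b`. -/
def x4 : FreeGroup (Fin 4) := FreeGroup.of 0
def y4 : FreeGroup (Fin 4) := FreeGroup.of 1
def a4 : FreeGroup (Fin 4) := FreeGroup.of 2
def b4 : FreeGroup (Fin 4) := FreeGroup.of 3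

/-- Relators `xy = yx`, `ab = ba`, `xⁱyʲ = aᵏbˡ`. -/
def rels4 (i j k l : ℤ) : Set (FreeGroup (Fin 4)) :=
  {x4 * y4 * (y4 * x4)⁻¹, a4 * b4 * (b4 * a4)⁻¹, x4 ^ i * y4 ^ j * (a4 ^ k * b4 ^ l)⁻¹}

namespace TwoVertex

variable (i j k l : ℤ)

abbrev G := PresentedGroup (rels4 i j k l)

def X : G i j k l := PresentedGroup.of 0
def Y : G i j k l := PresentedGroup.of 1
def A : G i j k l := PresentedGroup.of 2
def B : G i j k l := PresentedGroup.of 3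

lemma mk_rel {r : FreeGroup (Fin 4)} (hr : r ∈ rels4 i j k l) :
    PresentedGroup.mk (rels4 i j k l) r = 1 :=
  (QuotientGroup.eq_one_iff r).mpr (Subgroup.subset_normalClosure hr)

lemma hXY : Commute (X i j k l) (Y i j k l) := by
  have h := mk_rel i j k l (r := x4 * y4 * (y4 * x4)⁻¹) (by simp [rels4])
  simp only [map_mul, map_inv] at h
  have := mul_inv_eq_one.mp h
  simpa [Commute, SemiconjBy, X, Y, x4, y4, PresentedGroup.of] using this

lemma hAB : Commute (A i j k l) (B i j k l) := by
  have h := mk_rel i j k l (r := a4 * b4 * (b4 * a4)⁻¹) (by simp [rels4])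
  simp only [map_mul, map_inv] at h
  have := mul_inv_eq_one.mp h
  simpa [Commute, SemiconjBy, A, B, a4, b4, PresentedGroup.of] using this

lemma rel3 : X i j k l ^ i * Y i j k l ^ j = A i j k l ^ k * B i j k l ^ l := by
  have h := mk_rel i j k l (r := x4 ^ i * y4 ^ j * (a4 ^ k * b4 ^ l)⁻¹) (by simp [rels4])
  simp only [map_mul, map_inv, map_zpow] at h
  have := mul_inv_eq_one.mp h
  simpa [X, Y, A, B, x4, y4, a4, b4, PresentedGroup.of] using this

def Z : G i j k l := X i j k l ^ i * Y i j k l ^ j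

lemma hZcomm : ∀ g : G i j k l, Commute (Z i j k l) g := by
  intro g
  have hg : g ∈ Subgroup.centralizer {Z i j k l} := by
    apply PresentedGroup.generated_by
    intro t
    rw [Subgroup.mem_centralizer_singleton_iff]
    fin_cases t
    · exact ((((Commute.refl (X i j k l)).zpow_left i).mul_left
        ((hXY i j k l).symm.zpow_left j)).symm.eq : X i j k l * Z i j k l = _)
    · exact ((((hXY i j k l).zpow_left i).mul_left
        ((Commute.refl (Y i j k l)).zpow_left j)).symm.eq : Y i j k l * Z i j k l = _)
    · rw [Z, rel3]
      exact ((((Commute.refl (A i j k l)).zpow_left k).mul_left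
        ((hAB i j k l).symm.zpow_left l)).symm.eq : A i j k l * _ = _)
    · rw [Z, rel3]
      exact ((((hAB i j k l).zpow_left k).mul_left
        ((Commute.refl (B i j k l)).zpow_left l)).symm.eq : B i j k l * _ = _)
  have := Subgroup.mem_centralizer_singleton_iff.mp hg
  exact this.symm

noncomputable section

abbrev F2 := FreeGroup (Fin 2)

def sF : F2 := FreeGroup.of 0
def tF : F2 := FreeGroup.of 1

lemma philift : ∀ r ∈ rels4 i j k l,
    FreeGroup.lift (![sF ^ j, sF ^ (-i), tF ^ l, tF ^ (-k)] : Fin 4 → F2) r = 1 := by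
  intro r hr
  simp only [rels4, Set.mem_insert_iff, Set.mem_singleton_iff] at hr
  rcases hr with rfl | rfl | rfl <;>
    simp [x4, y4, a4, b4, ← zpow_mul, ← zpow_add] <;> group

def phi : G i j k l →* F2 := PresentedGroup.toGroup (philift i j k l)

lemma phi_X : phi i j k l (X i j k l) = sF ^ j := by
  simpa [phi, X] using PresentedGroup.toGroup.of (philift i j k l) (x := 0)
lemma phi_Y : phi i j k l (Y i j k l) = sF ^ (-i) := by
  simpa [phi, Y] using PresentedGroup.toGroup.of (philift i j k l) (x := 1)
lemma phi_A : phi i j k l (A i j k l) = tF ^ l := by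
  simpa [phi, A] using PresentedGroup.toGroup.of (philift i j k l) (x := 2)
lemma phi_B : phi i j k l (B i j k l) = tF ^ (-k) := by
  simpa [phi, B] using PresentedGroup.toGroup.of (philift i j k l) (x := 3)

lemma phi_Z : phi i j k l (Z i j k l) = 1 := by
  simp only [Z, map_mul, map_zpow, phi_X, phi_Y, ← zpow_mul, ← zpow_add]
  rw [mul_comm j i]
  simp

lemma chilift (hij : Int.gcd i j = 1) (hkl : Int.gcd k l = 1) : ∀ r ∈ rels4 i j k l,
    FreeGroup.lift (![Multiplicative.ofAdd (Int.gcdA i j), Multiplicative.ofAdd (Int.gcdB i j),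
      Multiplicative.ofAdd (Int.gcdA k l), Multiplicative.ofAdd (Int.gcdB k l)] :
        Fin 4 → Multiplicative ℤ) r = 1 := by
  have h1 : i * Int.gcdA i j + j * Int.gcdB i j = 1 := by
    have := Int.gcd_eq_gcd_ab i j; rw [hij] at this; exact_mod_cast this.symm
  have h2 : k * Int.gcdA k l + l * Int.gcdB k l = 1 := by
    have := Int.gcd_eq_gcd_ab k l; rw [hkl] at this; exact_mod_cast this.symm
  intro r hr
  simp only [rels4, Set.mem_insert_iff, Set.mem_singleton_iff] at hr
  rcases hr with rfl | rfl | rfl <;>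
    simp only [x4, y4, a4, b4, map_mul, map_inv, map_zpow, FreeGroup.lift_apply_of,
      Matrix.cons_val_zero, Matrix.cons_val_one, Matrix.head_cons, Matrix.cons_val_two,
      Matrix.cons_val_three, Matrix.tail_cons, ← ofAdd_zsmul, ← ofAdd_neg, ← ofAdd_add,
      smul_eq_mul, ofAdd_eq_one] <;> linarith

def chi (hij : Int.gcd i j = 1) (hkl : Int.gcd k l = 1) : G i j k l →* Multiplicative ℤ :=
  PresentedGroup.toGroup (chilift i j k l hij hkl)

lemma chi_Z (hij : Int.gcd i j = 1) (hkl : Int.gcd k l = 1) :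
    chi i j k l hij hkl (Z i j k l) = Multiplicative.ofAdd 1 := by
  have h1 : i * Int.gcdA i j + j * Int.gcdB i j = 1 := by
    have := Int.gcd_eq_gcd_ab i j; rw [hij] at this; exact_mod_cast this.symm
  have hx : chi i j k l hij hkl (X i j k l) = Multiplicative.ofAdd (Int.gcdA i j) := by
    simpa [chi, X] using PresentedGroup.toGroup.of (chilift i j k l hij hkl) (x := 0)
  have hy : chi i j k l hij hkl (Y i j k l) = Multiplicative.ofAdd (Int.gcdB i j) := by
    simpa [chi, Y] using PresentedGroup.toGroup.of (chilift i j k l hij hkl) (x := 1)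
  simp only [Z, map_mul, map_zpow, hx, hy, ← ofAdd_zsmul, ← ofAdd_add, smul_eq_mul]
  rw [h1]

lemma Z_pow_injective (hij : Int.gcd i j = 1) (hkl : Int.gcd k l = 1) :
    ∀ n : ℤ, Z i j k l ^ n = 1 → n = 0 := by
  intro n hn
  have h := congrArg (chi i j k l hij hkl) hn
  rw [map_zpow, map_one, chi_Z, ← ofAdd_zsmul, ofAdd_eq_one, smul_eq_mul, mul_one] at h
  exact h

def NZ : Subgroup (G i j k l) := Subgroup.zpowers (Z i j k l)

instance : (NZ i j k l).Normal := by
  constructor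
  intro n hn g
  obtain ⟨m, rfl⟩ := Subgroup.mem_zpowers_iff.mp hn
  have hc : Commute (Z i j k l ^ m) g := (hZcomm i j k l g).zpow_left m
  rw [← hc.eq, mul_assoc, mul_inv_cancel, mul_one]
  exact hn

lemma Zpow_XY (c : ℤ) : Z i j k l ^ c =
    X i j k l ^ (i * c) * Y i j k l ^ (j * c) := by
  rw [Z, Commute.mul_zpow ((hXY i j k l).zpow_zpow i j) c, ← zpow_mul, ← zpow_mul]

lemma Zpow_AB (c : ℤ) : Z i j k l ^ c =
    A i j k l ^ (k * c) * B i j k l ^ (l * c) := by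
  rw [Z, rel3, Commute.mul_zpow ((hAB i j k l).zpow_zpow k l) c, ← zpow_mul, ← zpow_mul]

def phibar : (G i j k l ⧸ NZ i j k l) →* F2 :=
  QuotientGroup.lift (NZ i j k l) (phi i j k l) (by
    rintro x hx
    obtain ⟨m, rfl⟩ := Subgroup.mem_zpowers_iff.mp hx
    rw [MonoidHom.mem_ker, map_zpow, phi_Z, one_zpow])

def psi : F2 →* (G i j k l ⧸ NZ i j k l) :=
  FreeGroup.lift
    ![QuotientGroup.mk' (NZ i j k l)
        (X i j k l ^ Int.gcdB i j * Y i j k l ^ (-Int.gcdA i j)),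
      QuotientGroup.mk' (NZ i j k l)
        (A i j k l ^ Int.gcdB k l * B i j k l ^ (-Int.gcdA k l))]

lemma psi_comp_phi (hij : Int.gcd i j = 1) (hkl : Int.gcd k l = 1) :
    (psi i j k l).comp (phi i j k l) = QuotientGroup.mk' (NZ i j k l) := by
  have h1 : i * Int.gcdA i j + j * Int.gcdB i j = 1 := by
    have := Int.gcd_eq_gcd_ab i j; rw [hij] at this; exact_mod_cast this.symm
  have h2 : k * Int.gcdA k l + l * Int.gcdB k l = 1 := by
    have := Int.gcd_eq_gcd_ab k l; rw [hkl] at this; exact_mod_cast this.symm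
  have hZmem : ∀ c : ℤ, QuotientGroup.mk' (NZ i j k l) (Z i j k l ^ c) = 1 := fun c =>
    (QuotientGroup.eq_one_iff _).mpr (Subgroup.zpow_mem_zpowers _ c)
  have hpsis : psi i j k l sF = QuotientGroup.mk' (NZ i j k l)
      (X i j k l ^ Int.gcdB i j * Y i j k l ^ (-Int.gcdA i j)) := by
    simp [psi, sF]
  have hpsit : psi i j k l tF = QuotientGroup.mk' (NZ i j k l)
      (A i j k l ^ Int.gcdB k l * B i j k l ^ (-Int.gcdA k l)) := by
    simp [psi, tF]
  have hXYc : ∀ a b c : ℤ, (X i j k l ^ a * Y i j k l ^ b) ^ c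
      = X i j k l ^ (a * c) * Y i j k l ^ (b * c) := fun a b c => by
    rw [Commute.mul_zpow ((hXY i j k l).zpow_zpow a b) c, ← zpow_mul, ← zpow_mul]
  have hABc : ∀ a b c : ℤ, (A i j k l ^ a * B i j k l ^ b) ^ c
      = A i j k l ^ (a * c) * B i j k l ^ (b * c) := fun a b c => by
    rw [Commute.mul_zpow ((hAB i j k l).zpow_zpow a b) c, ← zpow_mul, ← zpow_mul]
  ext t
  fin_cases t
  · show psi i j k l (phi i j k l (X i j k l)) = QuotientGroup.mk' _ (X i j k l)
    rw [phi_X, map_zpow, hpsis, ← map_zpow]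
    have hG : (X i j k l ^ Int.gcdB i j * Y i j k l ^ (-Int.gcdA i j)) ^ j
        = X i j k l * Z i j k l ^ (-Int.gcdA i j) := by
      have e1 : Int.gcdB i j * j = 1 + i * (-Int.gcdA i j) := by linear_combination h1
      have e2 : -Int.gcdA i j * j = j * (-Int.gcdA i j) := by ring
      rw [hXYc, Zpow_XY, e1, e2, zpow_add, zpow_one, mul_assoc]
    rw [hG, map_mul, hZmem, mul_one]
  · show psi i j k l (phi i j k l (Y i j k l)) = QuotientGroup.mk' _ (Y i j k l)
    rw [phi_Y, map_zpow, hpsis, ← map_zpow]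
    have hG : (X i j k l ^ Int.gcdB i j * Y i j k l ^ (-Int.gcdA i j)) ^ (-i)
        = Y i j k l * Z i j k l ^ (-Int.gcdB i j) := by
      have e1 : Int.gcdB i j * -i = i * (-Int.gcdB i j) := by ring
      have e2 : -Int.gcdA i j * -i = 1 + j * (-Int.gcdB i j) := by linear_combination h1
      rw [hXYc, Zpow_XY, e1, e2, zpow_add, zpow_one, ← mul_assoc,
        ← ((hXY i j k l).symm.zpow_right (i * -Int.gcdB i j)).eq, mul_assoc]
    rw [hG, map_mul, hZmem, mul_one]
  · show psi i j k l (phi i j k l (A i j k l)) = QuotientGroup.mk' _ (A i j k l)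
    rw [phi_A, map_zpow, hpsit, ← map_zpow]
    have hG : (A i j k l ^ Int.gcdB k l * B i j k l ^ (-Int.gcdA k l)) ^ l
        = A i j k l * Z i j k l ^ (-Int.gcdA k l) := by
      have e1 : Int.gcdB k l * l = 1 + k * (-Int.gcdA k l) := by linear_combination h2
      have e2 : -Int.gcdA k l * l = l * (-Int.gcdA k l) := by ring
      rw [hABc, Zpow_AB, e1, e2, zpow_add, zpow_one, mul_assoc]
    rw [hG, map_mul, hZmem, mul_one]
  · show psi i j k l (phi i j k l (B i j k l)) = QuotientGroup.mk' _ (B i j k l)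
    rw [phi_B, map_zpow, hpsit, ← map_zpow]
    have hG : (A i j k l ^ Int.gcdB k l * B i j k l ^ (-Int.gcdA k l)) ^ (-k)
        = B i j k l * Z i j k l ^ (-Int.gcdB k l) := by
      have e1 : Int.gcdB k l * -k = k * (-Int.gcdB k l) := by ring
      have e2 : -Int.gcdA k l * -k = 1 + l * (-Int.gcdB k l) := by linear_combination h2
      rw [hABc, Zpow_AB, e1, e2, zpow_add, zpow_one, ← mul_assoc,
        ← ((hAB i j k l).symm.zpow_right (k * -Int.gcdB k l)).eq, mul_assoc]
    rw [hG, map_mul, hZmem, mul_one]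

lemma mem_NZ_of_phi_eq_one (hij : Int.gcd i j = 1) (hkl : Int.gcd k l = 1)
    {g : G i j k l} (hg : phi i j k l g = 1) : g ∈ NZ i j k l := by
  have h := DFunLike.congr_fun (psi_comp_phi i j k l hij hkl) g
  rw [MonoidHom.comp_apply, hg, map_one] at h
  exact (QuotientGroup.eq_one_iff g).mp h.symm

section FreeHelpers

variable {β : Type*}

lemma free_trivial [IsEmpty β] : ∀ w : FreeGroup β, w = 1 := by
  intro w
  induction w using FreeGroup.induction_on with
  | C1 => rfl
  | of x => exact isEmptyElim x
  | inv_of x _ => exact isEmptyElim x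
  | mul x y hx hy => rw [hx, hy, one_mul]

lemma free_single [Subsingleton β] (b0 : β) :
    ∀ w : FreeGroup β, ∃ n : ℤ, w = FreeGroup.of b0 ^ n := by
  intro w
  induction w using FreeGroup.induction_on with
  | C1 => exact ⟨0, by simp⟩
  | of x => exact ⟨1, by rw [Subsingleton.elim x b0, zpow_one]⟩
  | inv_of x _ =>
      refine ⟨-1, ?_⟩
      rw [Subsingleton.elim x b0, zpow_neg, zpow_one]
  | mul x y hx hy =>
      obtain ⟨n, rfl⟩ := hx
      obtain ⟨m, rfl⟩ := hy
      exact ⟨n + m, (zpow_add _ n m).symm⟩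

lemma free_of_zpow_eq_one (b0 : β) {n : ℤ} (h : FreeGroup.of b0 ^ n = 1) : n = 0 := by
  have h2 := congrArg (FreeGroup.lift fun _ : β => Multiplicative.ofAdd (1 : ℤ)) h
  rw [map_zpow, FreeGroup.lift_apply_of,
    show (FreeGroup.lift fun _ : β => Multiplicative.ofAdd (1 : ℤ)) 1 = 1 from map_one _,
    ← ofAdd_zsmul, ofAdd_eq_one, smul_eq_mul, mul_one] at h2
  exact h2

lemma free_surj (b1 b2 : β) (hne : b1 ≠ b2) :
    ∃ f : FreeGroup β →* F2, Function.Surjective f := by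
  classical
  refine ⟨FreeGroup.lift fun b => if b = b1 then sF else if b = b2 then tF else 1, ?_⟩
  intro w
  show w ∈ (FreeGroup.lift _).range
  induction w using FreeGroup.induction_on with
  | C1 => exact one_mem _
  | of x =>
      fin_cases x
      · exact ⟨FreeGroup.of b1, by simp only [FreeGroup.lift_apply_of, if_pos rfl]; rfl⟩
      · exact ⟨FreeGroup.of b2, by simp only [FreeGroup.lift_apply_of, if_neg hne.symm, if_pos rfl]; rfl⟩
  | inv_of x hx => exact inv_mem hx
  | mul x y hx hy => exact mul_mem hx hy

end FreeHelpers

end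

end TwoVertex


open TwoVertex

/-- The two-vertex-tree instance of Theorem 3.7 / Theorem 3.2: for the amalgam of two
copies of ℤ² over a maximal cyclic subgroup on each side, every subgroup either surjects
the free group `F₂` or is trivial, infinite cyclic, or isomorphic to ℤ². -/
theorem two_vertex_strongest_Tits (i j k l : ℤ)
    (hij : Int.gcd i j = 1) (hkl : Int.gcd k l = 1) :
    ∀ S : Subgroup (PresentedGroup (rels4 i j k l)),
      (∃ f : S →* FreeGroup (Fin 2), Function.Surjective f) ∨
      S = ⊥ ∨ Nonempty (S ≃* Multiplicative ℤ) ∨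
      Nonempty (S ≃* Multiplicative (ℤ × ℤ)) := by
  classical
  intro S
  by_cases hTwo : ∃ b1 b2 : IsFreeGroup.Generators ↥(S.map (phi i j k l)), b1 ≠ b2
  · left
    obtain ⟨b1, b2, hne⟩ := hTwo
    obtain ⟨f2, hf2⟩ := free_surj b1 b2 hne
    refine ⟨(f2.comp (IsFreeGroup.toFreeGroup ↥(S.map (phi i j k l))).toMonoidHom).comp
      ((phi i j k l).subgroupMap S), ?_⟩
    simp only [MonoidHom.coe_comp, MulEquiv.coe_toMonoidHom]
    exact (hf2.comp (MulEquiv.surjective _)).comp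
      (MonoidHom.subgroupMap_surjective (phi i j k l) S)
  · right
    push_neg at hTwo
    haveI hsub : Subsingleton (IsFreeGroup.Generators ↥(S.map (phi i j k l))) := ⟨hTwo⟩
    -- the subgroup of exponents of Z landing in S
    let H : AddSubgroup ℤ :=
      { carrier := {n : ℤ | Z i j k l ^ n ∈ S}
        add_mem' := fun hp hq => by
          simp only [Set.mem_setOf_eq] at *
          rw [zpow_add]; exact S.mul_mem hp hq
        zero_mem' := by simp only [Set.mem_setOf_eq, zpow_zero]; exact S.one_mem
        neg_mem' := fun hp => by
          simp only [Set.mem_setOf_eq] at *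
          rw [zpow_neg]; exact S.inv_mem hp }
    obtain ⟨a, ha⟩ := Int.subgroup_cyclic H
    have haS : Z i j k l ^ a ∈ S := by
      have : a ∈ H := ha ▸ AddSubgroup.mem_closure_singleton.mpr ⟨1, one_smul _ _⟩
      exact this
    have hmem : ∀ n : ℤ, Z i j k l ^ n ∈ S → ∃ c : ℤ, a * c = n := by
      intro n hn
      have hn' : n ∈ H := hn
      rw [ha] at hn'
      obtain ⟨c, hc⟩ := AddSubgroup.mem_closure_singleton.mp hn'
      exact ⟨c, by rw [mul_comm]; simpa [smul_eq_mul] using hc⟩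
    rcases isEmpty_or_nonempty (IsFreeGroup.Generators ↥(S.map (phi i j k l))) with hEmp | hNon
    · -- image is trivial : S consists of powers of Z
      have hS1 : ∀ s ∈ S, ∃ m : ℤ, Z i j k l ^ m = s := by
        intro s hs
        have ht : (⟨phi i j k l s, Subgroup.mem_map.mpr ⟨s, hs, rfl⟩⟩ :
            ↥(S.map (phi i j k l))) = 1 := by
          apply (IsFreeGroup.toFreeGroup ↥(S.map (phi i j k l))).injective
          rw [map_one]
          exact free_trivial _
        have h1 : phi i j k l s = 1 := congrArg Subtype.val ht
        exact Subgroup.mem_zpowers_iff.mp (mem_NZ_of_phi_eq_one i j k l hij hkl h1)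
      by_cases haz : a = 0
      · left
        rw [eq_bot_iff]
        intro s hs
        obtain ⟨m, hm⟩ := hS1 s hs
        obtain ⟨c, hc⟩ := hmem m (by rw [hm]; exact hs)
        rw [haz, zero_mul] at hc
        rw [Subgroup.mem_bot, ← hm, ← hc, zpow_zero]
      · right; left
        refine ⟨?_⟩
        have hinj : Function.Injective (zpowersHom (PresentedGroup (rels4 i j k l))
            (Z i j k l ^ a)) := by
          rw [← MonoidHom.ker_eq_bot_iff, eq_bot_iff]
          intro m hm
          have h1 : Z i j k l ^ (a * m.toAdd) = 1 := by
            rw [zpow_mul]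
            simpa [zpowersHom_apply] using hm
          have h2 := Z_pow_injective i j k l hij hkl _ h1
          rcases mul_eq_zero.mp h2 with h | h
          · exact absurd h haz
          · simpa [Subgroup.mem_bot, ← toAdd_eq_zero] using h
        have hr : (zpowersHom (PresentedGroup (rels4 i j k l)) (Z i j k l ^ a)).range = S := by
          apply le_antisymm
          · rintro _ ⟨n, rfl⟩
            rw [zpowersHom_apply]
            exact S.zpow_mem haS _
          · intro s hs
            obtain ⟨m, hm⟩ := hS1 s hs
            obtain ⟨c, hc⟩ := hmem m (by rw [hm]; exact hs)
            exact ⟨Multiplicative.ofAdd c, by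
              rw [zpowersHom_apply, toAdd_ofAdd, ← zpow_mul, hc, hm]⟩
        exact ((MonoidHom.ofInjective hinj).trans (MulEquiv.subgroupCongr hr)).symm
    · -- image is infinite cyclic
      obtain ⟨b0⟩ := hNon
      set T := S.map (phi i j k l) with hT
      set e := IsFreeGroup.toFreeGroup ↥T with he
      set gbar : ↥T := e.symm (FreeGroup.of b0) with hgbar
      have hgen : ∀ t : ↥T, ∃ n : ℤ, t = gbar ^ n := by
        intro t
        obtain ⟨n, hn⟩ := free_single b0 (e t)
        refine ⟨n, e.injective ?_⟩
        rw [map_zpow, hn, hgbar, MulEquiv.apply_symm_apply]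
      have hgb1 : ∀ n : ℤ, gbar ^ n = 1 → n = 0 := by
        intro n hn
        have h1 := congrArg e hn
        rw [map_zpow, map_one, hgbar, MulEquiv.apply_symm_apply] at h1
        exact free_of_zpow_eq_one b0 h1
      obtain ⟨g, hgS, hgphi⟩ := Subgroup.mem_map.mp gbar.2
      have hφg : ∀ (c : ℤ), phi i j k l (g ^ c) = ((gbar : FreeGroup (Fin 2))) ^ c := by
        intro c; rw [map_zpow, hgphi]
      have hdec : ∀ s ∈ S, ∃ n m : ℤ, Z i j k l ^ m ∈ S ∧ s = Z i j k l ^ m * g ^ n := by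
        intro s hs
        obtain ⟨n, hn⟩ := hgen ⟨phi i j k l s, Subgroup.mem_map.mpr ⟨s, hs, rfl⟩⟩
        have hφs : phi i j k l s = (gbar : FreeGroup (Fin 2)) ^ n := by
          have h1 := congrArg Subtype.val hn
          rwa [SubgroupClass.coe_zpow] at h1
        have hsg : s * g ^ (-n) ∈ S := S.mul_mem hs (S.zpow_mem hgS (-n))
        have hphi1 : phi i j k l (s * g ^ (-n)) = 1 := by
          rw [map_mul, hφg, hφs, ← zpow_add, add_neg_cancel, zpow_zero]
        obtain ⟨m, hm⟩ := Subgroup.mem_zpowers_iff.mp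
          (mem_NZ_of_phi_eq_one i j k l hij hkl hphi1)
        refine ⟨n, m, by rw [hm]; exact hsg, ?_⟩
        rw [hm]
        group
      by_cases haz : a = 0
      · right; left
        refine ⟨?_⟩
        have hinj : Function.Injective (zpowersHom (PresentedGroup (rels4 i j k l)) g) := by
          rw [← MonoidHom.ker_eq_bot_iff, eq_bot_iff]
          intro m hm
          have h1 : g ^ m.toAdd = 1 := by simpa [zpowersHom_apply] using hm
          have h2 : gbar ^ m.toAdd = 1 := by
            apply Subtype.val_injective
            rw [SubgroupClass.coe_zpow, ← hgphi, ← map_zpow, h1, map_one]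
            rfl
          simpa [Subgroup.mem_bot, ← toAdd_eq_zero] using hgb1 _ h2
        have hr : (zpowersHom (PresentedGroup (rels4 i j k l)) g).range = S := by
          apply le_antisymm
          · rintro _ ⟨n, rfl⟩
            rw [zpowersHom_apply]
            exact S.zpow_mem hgS _
          · intro s hs
            obtain ⟨n, m, hmS, hsd⟩ := hdec s hs
            obtain ⟨c, hc⟩ := hmem m hmS
            rw [haz, zero_mul] at hc
            refine ⟨Multiplicative.ofAdd n, ?_⟩
            rw [zpowersHom_apply, toAdd_ofAdd, hsd, ← hc, zpow_zero, one_mul]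
        exact ((MonoidHom.ofInjective hinj).trans (MulEquiv.subgroupCongr hr)).symm
      · right; right
        refine ⟨?_⟩
        let F : Multiplicative (ℤ × ℤ) →* PresentedGroup (rels4 i j k l) :=
          MonoidHom.mk'
            (fun mn => Z i j k l ^ (a * mn.toAdd.1) * g ^ mn.toAdd.2)
            (by
              intro u v
              simp only [toAdd_mul, Prod.fst_add, Prod.snd_add]
              rw [mul_add, zpow_add, zpow_add]
              exact (((hZcomm i j k l g).zpow_zpow (a * v.toAdd.1)
                u.toAdd.2).mul_mul_mul_comm _ _))
        have hFapp : ∀ mn : Multiplicative (ℤ × ℤ),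
            F mn = Z i j k l ^ (a * mn.toAdd.1) * g ^ mn.toAdd.2 := fun _ => rfl
        have hinj : Function.Injective F := by
          rw [← MonoidHom.ker_eq_bot_iff, eq_bot_iff]
          intro m hm
          have h1 : Z i j k l ^ (a * m.toAdd.1) * g ^ m.toAdd.2 = 1 := hm
          have h2 : (gbar : FreeGroup (Fin 2)) ^ m.toAdd.2 = 1 := by
            have := congrArg (phi i j k l) h1
            rwa [map_mul, map_zpow, phi_Z, one_zpow, one_mul, hφg, map_one] at this
          have h3 : m.toAdd.2 = 0 := by
            apply hgb1
            apply Subtype.val_injective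
            rw [SubgroupClass.coe_zpow, h2]
            rfl
          have h4 : Z i j k l ^ (a * m.toAdd.1) = 1 := by
            rwa [h3, zpow_zero, mul_one] at h1
          have h5 := Z_pow_injective i j k l hij hkl _ h4
          rcases mul_eq_zero.mp h5 with h | h
          · exact absurd h haz
          · rw [Subgroup.mem_bot]
            have : m.toAdd = (0, 0) := Prod.ext h h3
            simpa [← toAdd_eq_zero, Prod.ext_iff] using this
        have hr : F.range = S := by
          apply le_antisymm
          · rintro _ ⟨mn, rfl⟩
            rw [hFapp]
            exact S.mul_mem (by rw [zpow_mul]; exact S.zpow_mem haS _) (S.zpow_mem hgS _)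
          · intro s hs
            obtain ⟨n, m, hmS, hsd⟩ := hdec s hs
            obtain ⟨c, hc⟩ := hmem m hmS
            refine ⟨Multiplicative.ofAdd (c, n), ?_⟩
            rw [hFapp, toAdd_ofAdd, hsd, hc]
        exact ((MonoidHom.ofInjective hinj).trans (MulEquiv.subgroupCongr hr)).symm
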